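/- Let B ⊂ ℝ^n be a full-dimensional box, let f be a twice continuously differentiable function on B with Hessian H_f(x) ⪰ 0 for all x ∈ B, let δ > 0, and let q be a twice continuously differentiable function (e.g., a polynomial) such that |∂²f(x)/∂x_i∂x_j − ∂²q(x)/∂x_i∂x_j| ≤ δ for all x ∈ B and all i, j ∈ {1, …, n}. Then the function p(x) = q(x) + nδ·(x_1² + … + x_n²) satisfies H_p(x) ⪰ nδ·I ≻ 0 for all x ∈ B; in particular, p is convex over B. -/

import Mathlib

/-- The partial derivative of `g : ℝⁿ → ℝ` in the `i`-th coordinate direction. -/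
noncomputable def partialDeriv {n : ℕ} (i : Fin n) (g : (Fin n → ℝ) → ℝ) :
    (Fin n → ℝ) → ℝ :=
  fun x => fderiv ℝ g x (Pi.single i 1)

/-- If `f` is convex over the box `B` (PSD Hessian), `q` is twice continuously
differentiable with all second partial derivatives within `δ` of those of `f` on
`B`, then `p x = q x + n δ ‖x‖²` has Hessian `⪰ n δ I ≻ 0` on `B`; in particular `p`
is convex over `B`. -/
theorem perturbed_approximation_is_convex
    (n : ℕ) (l u : Fin n → ℝ) (hlu : ∀ i, l i < u i)
    (B : Set (Fin n → ℝ)) (hB : B = {x | ∀ i, l i ≤ x i ∧ x i ≤ u i})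
    (f q : (Fin n → ℝ) → ℝ)
    (U : Set (Fin n → ℝ)) (hUopen : IsOpen U) (hBU : B ⊆ U)
    (hf : ContDiffOn ℝ 2 f U) (hq : ContDiffOn ℝ 2 q U)
    (hfconv : ∀ x ∈ B,
      (Matrix.of fun i j => partialDeriv i (partialDeriv j f) x).PosSemidef)
    (δ : ℝ) (hδ : 0 < δ)
    (hclose : ∀ x ∈ B, ∀ i j,
      |partialDeriv i (partialDeriv j f) x - partialDeriv i (partialDeriv j q) x| ≤ δ)
    (p : (Fin n → ℝ) → ℝ)
    (hp : ∀ x, p x = q x + n * δ * ∑ i, (x i) ^ 2) :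
    ∀ x ∈ B,
      ((Matrix.of fun i j => partialDeriv i (partialDeriv j p) x) -
        ((n : ℝ) * δ) • (1 : Matrix (Fin n) (Fin n) ℝ)).PosSemidef ∧
      (Matrix.of fun i j => partialDeriv i (partialDeriv j p) x).PosDef := by
  intro x hx
  have hxU : x ∈ U := hBU hx
  set c : ℝ := (n : ℝ) * δ with hc
  -- derivative of the sum of squares
  have hs : ∀ y : Fin n → ℝ, HasFDerivAt (fun y : Fin n → ℝ => ∑ i, y i ^ 2)
      (∑ i, (2 * y i) • (ContinuousLinearMap.proj i : (Fin n → ℝ) →L[ℝ] ℝ)) y := by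
    intro y
    have h : ∀ i ∈ Finset.univ, HasFDerivAt (fun y : Fin n → ℝ => y i ^ 2)
        ((2 * y i) • (ContinuousLinearMap.proj i : (Fin n → ℝ) →L[ℝ] ℝ)) y := by
      intro i _
      have h1 : HasFDerivAt (fun z : Fin n → ℝ => z i)
          (ContinuousLinearMap.proj i : (Fin n → ℝ) →L[ℝ] ℝ) y :=
        (ContinuousLinearMap.proj i : (Fin n → ℝ) →L[ℝ] ℝ).hasFDerivAt
      have := (hasDerivAt_pow 2 (y i)).comp_hasFDerivAt y h1
      norm_num at this
      exact this
    simpa using HasFDerivAt.fun_sum h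
  -- q is differentiable on U
  have hqdiff : ∀ y ∈ U, DifferentiableAt ℝ q y := fun y hy =>
    (hq.contDiffAt (hUopen.mem_nhds hy)).differentiableAt two_ne_zero
  -- first partial derivatives of p on U
  have hppd : ∀ y ∈ U, ∀ j, partialDeriv j p y = partialDeriv j q y + (2 * c) * y j := by
    intro y hy j
    have hP : HasFDerivAt p (fderiv ℝ q y +
        c • (∑ i, (2 * y i) • (ContinuousLinearMap.proj i : (Fin n → ℝ) →L[ℝ] ℝ))) y := by
      have := ((hqdiff y hy).hasFDerivAt).add ((hs y).const_mul c)
      have hpe : p = fun z => q z + c * ∑ i, z i ^ 2 := by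
        funext z; rw [hp z]
      rw [hpe]
      exact this
    show fderiv ℝ p y (Pi.single j 1) = _
    rw [hP.fderiv]
    simp [partialDeriv, ContinuousLinearMap.sum_apply, Pi.single_apply]
    ring
  -- differentiability of fderiv q at x
  have hdq : DifferentiableAt ℝ (fderiv ℝ q) x := by
    have h2 : ContDiffAt ℝ 2 q x := hq.contDiffAt (hUopen.mem_nhds hxU)
    exact (h2.fderiv_right (m := 1) (by norm_num)).differentiableAt one_ne_zero
  -- second partials of q at x in terms of second fderiv
  have hq2 : ∀ i j : Fin n, partialDeriv i (partialDeriv j q) x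
      = fderiv ℝ (fderiv ℝ q) x (Pi.single i 1) (Pi.single j 1) := by
    intro i j
    show fderiv ℝ (fun y => fderiv ℝ q y (Pi.single j 1)) x (Pi.single i 1) = _
    rw [fderiv_clm_apply hdq (differentiableAt_const _)]
    simp
  -- symmetry of second partials of q
  have hqsym : ∀ i j : Fin n,
      partialDeriv i (partialDeriv j q) x = partialDeriv j (partialDeriv i q) x := by
    intro i j
    rw [hq2, hq2]
    exact (hq.contDiffAt (hUopen.mem_nhds hxU)).isSymmSndFDerivAt (by simp) _ _
  -- second partials of p at x
  have hHp : ∀ i j : Fin n, partialDeriv i (partialDeriv j p) x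
      = partialDeriv i (partialDeriv j q) x + (2 * c) * (if i = j then 1 else 0) := by
    intro i j
    have hev : partialDeriv j p =ᶠ[nhds x]
        (fun y => partialDeriv j q y + (2 * c) * y j) := by
      filter_upwards [hUopen.mem_nhds hxU] with y hy using hppd y hy j
    show fderiv ℝ (partialDeriv j p) x (Pi.single i 1) = _
    rw [hev.fderiv_eq]
    have hA : DifferentiableAt ℝ (fun y : Fin n → ℝ => partialDeriv j q y) x :=
      hdq.clm_apply (differentiableAt_const (Pi.single j 1))
    have hprj : HasFDerivAt (fun z : Fin n → ℝ => z j)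
        (ContinuousLinearMap.proj j : (Fin n → ℝ) →L[ℝ] ℝ) x :=
      (ContinuousLinearMap.proj j : (Fin n → ℝ) →L[ℝ] ℝ).hasFDerivAt
    have hB2 : DifferentiableAt ℝ (fun y : Fin n → ℝ => (2 * c) * y j) x :=
      (hprj.const_mul (2 * c)).differentiableAt
    rw [fderiv_fun_add hA hB2, ContinuousLinearMap.add_apply]
    have e2 : fderiv ℝ (fun y : Fin n → ℝ => (2 * c) * y j) x (Pi.single i 1)
        = (2 * c) * (if i = j then 1 else 0) := by
      rw [(hprj.const_mul (2 * c)).fderiv]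
      simp [Pi.single_apply, eq_comm]
    rw [e2]
    rfl
  -- abbreviations
  set Hq : Fin n → Fin n → ℝ := fun i j => partialDeriv i (partialDeriv j q) x with hHq
  set Hf : Fin n → Fin n → ℝ := fun i j => partialDeriv i (partialDeriv j f) x with hHf
  -- quadratic form of f's Hessian is nonneg
  have hfpos : ∀ v : Fin n → ℝ, 0 ≤ ∑ i, ∑ j, v i * Hf i j * v j := by
    intro v
    have := (hfconv x hx).dotProduct_mulVec_nonneg v
    simpa [dotProduct, Matrix.mulVec, Finset.mul_sum, mul_assoc] using this
  -- lower bound on q's Hessian quadratic form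
  have hqlow : ∀ v : Fin n → ℝ,
      -(c * ∑ i, v i ^ 2) ≤ ∑ i, ∑ j, v i * Hq i j * v j := by
    intro v
    have h2 : ∑ i, ∑ j, v i * Hf i j * v j - ∑ i, ∑ j, v i * Hq i j * v j
        = ∑ i, ∑ j, v i * (Hf i j - Hq i j) * v j := by
      rw [← Finset.sum_sub_distrib]
      refine Finset.sum_congr rfl fun i _ => ?_
      rw [← Finset.sum_sub_distrib]
      exact Finset.sum_congr rfl fun j _ => by ring
    have h3 : ∑ i, ∑ j, v i * (Hf i j - Hq i j) * v j
        ≤ δ * ((∑ i, |v i|) * (∑ j, |v j|)) := by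
      have hb : ∑ i, ∑ j, v i * (Hf i j - Hq i j) * v j
          ≤ ∑ i, ∑ j, δ * (|v i| * |v j|) := by
        refine Finset.sum_le_sum fun i _ => Finset.sum_le_sum fun j _ => ?_
        calc v i * (Hf i j - Hq i j) * v j ≤ |v i * (Hf i j - Hq i j) * v j| := le_abs_self _
          _ = |v i| * |Hf i j - Hq i j| * |v j| := by rw [abs_mul, abs_mul]
          _ ≤ |v i| * δ * |v j| := by
              have hcl : |Hf i j - Hq i j| ≤ δ := hclose x hx i j
              have h0 : (0:ℝ) ≤ |v i| := abs_nonneg _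
              have h1 : (0:ℝ) ≤ |v j| := abs_nonneg _
              exact mul_le_mul_of_nonneg_right (mul_le_mul_of_nonneg_left hcl h0) h1
          _ = δ * (|v i| * |v j|) := by ring
      have he : ∑ i, ∑ j, δ * (|v i| * |v j|)
          = δ * ((∑ i, |v i|) * (∑ j, |v j|)) := by
        rw [Finset.sum_mul_sum, Finset.mul_sum]
        exact Finset.sum_congr rfl fun i _ => by rw [Finset.mul_sum]
      rw [← he]; exact hb
    have h4 : (∑ i, |v i|) * (∑ j, |v j|) ≤ (n : ℝ) * ∑ i, v i ^ 2 := by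
      have h5 := sq_sum_le_card_mul_sum_sq (s := Finset.univ) (f := fun i : Fin n => |v i|)
      have h6 : (∑ i, |v i|) * (∑ j, |v j|) = (∑ i, |v i|) ^ 2 := by ring
      rw [h6]
      simpa [sq_abs] using h5
    have h7 : δ * ((∑ i, |v i|) * (∑ j, |v j|)) ≤ δ * ((n : ℝ) * ∑ i, v i ^ 2) :=
      mul_le_mul_of_nonneg_left h4 hδ.le
    have h8 := hfpos v
    have h9 : c * ∑ i, v i ^ 2 = δ * ((n : ℝ) * ∑ i, v i ^ 2) := by rw [hc]; ring
    linarith [h2, h3, h7, h8]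
  -- quadratic form identity
  have quad : ∀ (M : Matrix (Fin n) (Fin n) ℝ) (v : Fin n → ℝ),
      dotProduct v (M.mulVec v) = ∑ i, ∑ j, v i * M i j * v j := by
    intro M v
    simp [dotProduct, Matrix.mulVec, Finset.mul_sum, mul_assoc]
  have qform : ∀ (d : ℝ) (v : Fin n → ℝ),
      ∑ i, ∑ j, v i * (Hq i j + d * (if i = j then 1 else 0)) * v j
        = (∑ i, ∑ j, v i * Hq i j * v j) + d * ∑ i, v i ^ 2 := by
    intro d v
    have h1 : ∀ i : Fin n, ∑ j, v i * (Hq i j + d * (if i = j then 1 else 0)) * v j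
        = (∑ j, v i * Hq i j * v j) + d * v i ^ 2 := by
      intro i
      have : ∀ j, v i * (Hq i j + d * (if i = j then 1 else 0)) * v j
          = v i * Hq i j * v j + (if i = j then d * v i * v j else 0) := by
        intro j; by_cases h : i = j <;> simp [h] <;> ring
      rw [Finset.sum_congr rfl fun j _ => this j, Finset.sum_add_distrib,
        Finset.sum_ite_eq Finset.univ i (fun j => d * v i * v j)]
      simp [sq]; ring
    rw [Finset.sum_congr rfl fun i _ => h1 i, Finset.sum_add_distrib, ← Finset.mul_sum]
  -- entries of the two matrices
  have entry1 : ∀ i j : Fin n,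
      ((Matrix.of fun i j => partialDeriv i (partialDeriv j p) x) -
        c • (1 : Matrix (Fin n) (Fin n) ℝ)) i j
        = Hq i j + c * (if i = j then 1 else 0) := by
    intro i j
    simp only [Matrix.sub_apply, Matrix.smul_apply, Matrix.one_apply, Matrix.of_apply,
      smul_eq_mul, hHp i j]
    by_cases h : i = j <;> simp [h] <;> ring
  have entry2 : ∀ i j : Fin n,
      (Matrix.of fun i j => partialDeriv i (partialDeriv j p) x) i j
        = Hq i j + (2 * c) * (if i = j then 1 else 0) := by
    intro i j
    simp only [Matrix.of_apply, hHp i j]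
    rfl
  -- symmetry of both matrices
  have hqs : ∀ i j : Fin n, Hq i j = Hq j i := fun i j => hqsym i j
  have herm1 : ((Matrix.of fun i j => partialDeriv i (partialDeriv j p) x) -
      c • (1 : Matrix (Fin n) (Fin n) ℝ)).IsHermitian := by
    apply Matrix.IsHermitian.ext
    intro i j
    simp only [Matrix.conjTranspose_apply, star_trivial] at *
    rw [entry1 i j, entry1 j i, hqs j i]
    by_cases h : i = j
    · subst h; rfl
    · rw [if_neg h, if_neg fun hh => h hh.symm]
  have herm2 : (Matrix.of fun i j => partialDeriv i (partialDeriv j p) x).IsHermitian := by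
    apply Matrix.IsHermitian.ext
    intro i j
    simp only [Matrix.conjTranspose_apply, star_trivial] at *
    rw [entry2 i j, entry2 j i, hqs j i]
    by_cases h : i = j
    · subst h; rfl
    · rw [if_neg h, if_neg fun hh => h hh.symm]
  refine ⟨Matrix.posSemidef_iff_dotProduct_mulVec.mpr ⟨herm1, ?_⟩,
    Matrix.posDef_iff_dotProduct_mulVec.mpr ⟨herm2, ?_⟩⟩
  · intro v
    have hM : ∀ w : Fin n → ℝ, dotProduct w
        ((((Matrix.of fun i j => partialDeriv i (partialDeriv j p) x) -
          c • (1 : Matrix (Fin n) (Fin n) ℝ))).mulVec w)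
        = (∑ i, ∑ j, w i * Hq i j * w j) + c * ∑ i, w i ^ 2 := by
      intro w
      rw [quad]
      rw [Finset.sum_congr rfl fun i _ => Finset.sum_congr rfl fun j _ => by rw [entry1 i j]]
      exact qform c w
    have := hqlow v
    simp only [star_trivial]
    rw [hM v]
    linarith
  · intro v hv
    obtain ⟨i0, hi0⟩ : ∃ i, v i ≠ 0 := by
      by_contra h
      push_neg at h
      exact hv (funext h)
    have hn : 0 < (n : ℝ) := by
      have : 0 < n := Fin.pos i0
      exact_mod_cast this
    have hcpos : 0 < c := mul_pos hn hδ
    have hsum : 0 < ∑ i, v i ^ 2 := by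
      apply Finset.sum_pos'
      · intro i _; positivity
      · exact ⟨i0, Finset.mem_univ i0, by positivity⟩
    have hM : dotProduct v
        ((Matrix.of fun i j => partialDeriv i (partialDeriv j p) x).mulVec v)
        = (∑ i, ∑ j, v i * Hq i j * v j) + (2 * c) * ∑ i, v i ^ 2 := by
      rw [quad]
      rw [Finset.sum_congr rfl fun i _ => Finset.sum_congr rfl fun j _ => by rw [entry2 i j]]
      exact qform (2 * c) v
    have := hqlow v
    simp only [star_trivial]
    rw [hM]
    nlinarith
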